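/- Consider the queue machine with states q and q_F and transitions (q,b,a,q), (q,a,ab,q), (q,A,Ab,q), (q,A,AA,q_F), started with initial tape contents 'A'. In any halting computation of this machine, the total number of symbols on the tape at the end is a Fibonacci number; conversely, for every Fibonacci number F ≥ some minimal value there is a halting computation ending with exactly F symbols. Moreover, in the final tape string, the occurrences of the symbol A (apart from the last one) occur exactly at positions F_k − 1 for Fibonacci numbers F_k. -/
import Mathlib


/-- The tape alphabet of the example queue machine. -/
inductive QSym : Type
  | a : QSym
  | b : QSym
  | A : QSym
deriving DecidableEq

/-- Configurations are pairs (r, w) where w is the full tape contents (nothing is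
ever erased) and r is the position of the read head; the current queue is
`w.drop r`.  Non-halting steps in state q: b ↦ a, a ↦ ab, A ↦ Ab. -/
inductive QStep : ℕ × List QSym → ℕ × List QSym → Prop
  | readb (r : ℕ) (w t : List QSym) :
      w.drop r = QSym.b :: t → QStep (r, w) (r + 1, w ++ [QSym.a])
  | reada (r : ℕ) (w t : List QSym) :
      w.drop r = QSym.a :: t → QStep (r, w) (r + 1, w ++ [QSym.a, QSym.b])
  | readA (r : ℕ) (w t : List QSym) :
      w.drop r = QSym.A :: t → QStep (r, w) (r + 1, w ++ [QSym.A, QSym.b])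

/-- Configurations reachable from the initial configuration (tape `A`, read
head at position 0) without entering the final state. -/
def QReaches (c : ℕ × List QSym) : Prop :=
  Relation.ReflTransGen QStep (0, [QSym.A]) c

/-- `s` is the final tape of some halting computation of the machine: from a
reachable configuration whose queue starts with A, the halting transition
(q, A, AA, q_F) is taken. -/
def FinalTape (s : List QSym) : Prop :=
  ∃ (r : ℕ) (w t : List QSym), QReaches (r, w) ∧ w.drop r = QSym.A :: t ∧
    s = w ++ [QSym.A, QSym.A]

namespace Q16

/-- image of one symbol under one machine step -/
def ext : QSym → List QSym
  | QSym.b => [QSym.a]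
  | QSym.a => [QSym.a, QSym.b]
  | QSym.A => [QSym.A, QSym.b]

def phi (l : List QSym) : List QSym := l.flatMap ext

@[simp] lemma phi_nil : phi [] = [] := rfl
@[simp] lemma phi_cons (x : QSym) (l : List QSym) : phi (x :: l) = ext x ++ phi l := rfl

/-- queue contents at the k-th visit of an `A` at the head of the queue -/
def D : ℕ → List QSym
  | 0 => [QSym.A]
  | k+1 => phi (D k)

/-- read-head position at the k-th `A`-visit -/
def p : ℕ → ℕ
  | 0 => 0
  | k+1 => p k + (D k).length

/-- tape contents at the k-th `A`-visit -/
def T : ℕ → List QSym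
  | 0 => [QSym.A]
  | k+1 => T k ++ phi (D k)

@[simp] lemma D_zero : D 0 = [QSym.A] := rfl
@[simp] lemma D_succ (k : ℕ) : D (k+1) = phi (D k) := rfl
@[simp] lemma p_zero : p 0 = 0 := rfl
@[simp] lemma p_succ (k : ℕ) : p (k+1) = p k + (D k).length := rfl
@[simp] lemma T_zero : T 0 = [QSym.A] := rfl
@[simp] lemma T_succ (k : ℕ) : T (k+1) = T k ++ phi (D k) := rfl

lemma T_length (k : ℕ) : (T k).length = p (k+1) := by
  induction k with
  | zero => rfl
  | succ k ih => simp only [T_succ, p_succ, D_succ, List.length_append, ih]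

lemma T_drop (k : ℕ) : (T k).drop (p k) = D k := by
  induction k with
  | zero => rfl
  | succ k _ =>
      have h : p k + (D k).length = (T k).length := (T_length k).symm
      rw [T_succ, p_succ, h, List.drop_left, D_succ]

lemma D_struct (k : ℕ) : ∃ u, D k = QSym.A :: u ∧ ∀ x ∈ u, x ≠ QSym.A := by
  induction k with
  | zero => exact ⟨[], rfl, by simp⟩
  | succ k ih =>
      obtain ⟨u, hu, hA⟩ := ih
      refine ⟨QSym.b :: phi u, by rw [D_succ, hu]; rfl, ?_⟩
      intro x hx
      simp only [List.mem_cons] at hx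
      rcases hx with rfl | hx
      · decide
      · rcases List.mem_flatMap.1 hx with ⟨y, hy, hxy⟩
        have hyA := hA y hy
        cases y with
        | a => rcases (by simpa [ext] using hxy : x = QSym.a ∨ x = QSym.b) with rfl | rfl <;> decide
        | b => rw [(by simpa [ext] using hxy : x = QSym.a)]; decide
        | A => exact absurd rfl hyA

lemma phi_length (l : List QSym) :
    (phi l).length + l.count QSym.b = 2 * l.length := by
  induction l with
  | nil => rfl
  | cons x l ih =>
      cases x <;> simp [List.count_cons, ext] <;> omega

lemma phi_count_b (l : List QSym) :
    (phi l).count QSym.b + l.count QSym.b = l.length := by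
  induction l with
  | nil => rfl
  | cons x l ih =>
      cases x <;> simp [List.count_cons, ext, List.count_append] <;> omega

lemma D_len (k : ℕ) :
    (D k).length = Nat.fib (k+2) ∧ (D k).count QSym.b = Nat.fib k := by
  induction k with
  | zero => constructor <;> rfl
  | succ k ih =>
      obtain ⟨h1, h2⟩ := ih
      have hl := phi_length (D k)
      have hc := phi_count_b (D k)
      have f1 : Nat.fib (k+2) = Nat.fib k + Nat.fib (k+1) := Nat.fib_add_two
      have f2 : Nat.fib (k+3) = Nat.fib (k+1) + Nat.fib (k+2) := Nat.fib_add_two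
      rw [D_succ]
      constructor
      · show (phi (D k)).length = Nat.fib (k+3); omega
      · show (phi (D k)).count QSym.b = Nat.fib (k+1); omega

lemma p_eq (k : ℕ) : p k + 2 = Nat.fib (k+3) := by
  induction k with
  | zero => rfl
  | succ k ih =>
      have := (D_len k).1
      have f : Nat.fib (k+1+3) = Nat.fib (k+2) + Nat.fib (k+3) := by
        rw [show k+1+3 = k+2+2 from rfl, Nat.fib_add_two, show k+2+1 = k+3 from rfl]
      rw [p_succ]
      omega

lemma p_strictMono : StrictMono p := by
  apply strictMono_nat_of_lt_succ
  intro k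
  have h1 := (D_len k).1
  have h2 : 1 ≤ Nat.fib (k+2) := Nat.fib_pos.2 (by omega)
  rw [p_succ]
  omega

lemma le_p (k : ℕ) : k ≤ p k := by
  induction k with
  | zero => exact Nat.le_refl 0
  | succ k ih =>
      exact Nat.succ_le_of_lt (lt_of_le_of_lt ih (p_strictMono (Nat.lt_succ_self k)))

/-- positions of A in the tape -/
lemma A_pos (k : ℕ) : ∀ i, i < p (k+1) →
    ((T k).getD i QSym.a = QSym.A ↔ ∃ j, i = p j) := by
  induction k with
  | zero =>
      intro i hi
      simp only [p_succ, p_zero, D_zero, List.length_cons, List.length_nil] at hi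
      have : i = 0 := by omega
      subst this
      simp only [T_zero]
      exact ⟨fun _ => ⟨0, rfl⟩, fun _ => rfl⟩
  | succ k ih =>
      intro i hi
      by_cases hlt : i < p (k+1)
      · have hT : (T (k+1)).getD i QSym.a = (T k).getD i QSym.a := by
          rw [T_succ, List.getD_eq_getElem?_getD, List.getD_eq_getElem?_getD,
            List.getElem?_append, if_pos (by rw [T_length]; exact hlt)]
        rw [hT]
        exact ih i hlt
      · push_neg at hlt
        have hlen : (T k).length = p (k+1) := T_length k
        have hp2 : p (k+1+1) = p (k+1) + (D (k+1)).length := rfl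
        have hDlen : i - p (k+1) < (D (k+1)).length := by omega
        have hT : (T (k+1)).getD i QSym.a = (D (k+1)).getD (i - p (k+1)) QSym.a := by
          rw [T_succ, List.getD_eq_getElem?_getD, List.getD_eq_getElem?_getD,
            List.getElem?_append, if_neg (by omega), hlen, ← D_succ]
        rw [hT]
        obtain ⟨u, hu, hA⟩ := D_struct (k+1)
        constructor
        · intro h
          refine ⟨k+1, ?_⟩
          by_contra hne
          have h0 : 0 < i - p (k+1) := by omega
          rw [hu] at h hDlen
          simp only [List.length_cons] at hDlen
          have hlt' : i - p (k+1) - 1 < u.length := by omega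
          have : u.getD (i - p (k+1) - 1) QSym.a = QSym.A := by
            rw [← h]
            cases h' : i - p (k+1) with
            | zero => omega
            | succ n => simp [h']
          have hmem : u.getD (i - p (k+1) - 1) QSym.a ∈ u := by
            rw [List.getD_eq_getElem u QSym.a hlt']
            exact List.getElem_mem hlt'
          exact hA _ hmem this
        · rintro ⟨j, rfl⟩
          have : j = k + 1 := by
            by_contra hne
            rcases Nat.lt_or_ge j (k+1) with hj | hj
            · have := p_strictMono hj; omega
            · have hj2 : k + 2 ≤ j := by omega
              have hm := p_strictMono.monotone hj2
              have e : p (k+1+1) = p (k+2) := rfl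
              omega
          subst this
          have h0 : p (k+1) - p (k+1) = 0 := by omega
          rw [h0, hu]
          rfl

/-- the deterministic tape trajectory -/
def tape : ℕ → List QSym
  | 0 => [QSym.A]
  | r+1 => tape r ++ ext ((tape r).getD r QSym.a)

@[simp] lemma tape_zero : tape 0 = [QSym.A] := rfl
@[simp] lemma tape_succ (r : ℕ) :
    tape (r+1) = tape r ++ ext ((tape r).getD r QSym.a) := rfl

lemma ext_len_pos (x : QSym) : 0 < (ext x).length := by cases x <;> simp [ext]

lemma lt_tape_length (r : ℕ) : r < (tape r).length := by
  induction r with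
  | zero => simp
  | succ r ih =>
      rw [tape_succ, List.length_append]
      have := ext_len_pos ((tape r).getD r QSym.a)
      omega

lemma tape_prefix_succ (r : ℕ) : tape r <+: tape (r+1) := ⟨_, rfl⟩

lemma tape_prefix {r s : ℕ} (h : r ≤ s) : tape r <+: tape s := by
  induction s with
  | zero => have : r = 0 := by omega
            subst this; exact List.prefix_refl _
  | succ s ih =>
      rcases Nat.lt_or_ge r (s+1) with h' | h'
      · exact (ih (by omega)).trans (tape_prefix_succ s)
      · have : r = s + 1 := by omega
        subst this; exact List.prefix_refl _

lemma reach_eq_tape {c : ℕ × List QSym} (h : QReaches c) : c.2 = tape c.1 := by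
  induction h with
  | refl => rfl
  | tail _ hstep ih =>
      cases hstep with
      | readb r w t hd =>
          simp only at ih; subst ih
          have hg : (tape r).getD r QSym.a = QSym.b := by
            rw [List.getD_eq_getElem?_getD]
            have h2 : (tape r)[r]? = ((tape r).drop r)[0]? := by
              simp [List.getElem?_drop]
            rw [h2, hd]; simp
          show tape r ++ [QSym.a] = tape (r+1)
          rw [tape_succ, hg]; rfl
      | reada r w t hd =>
          simp only at ih; subst ih
          have hg : (tape r).getD r QSym.a = QSym.a := by
            rw [List.getD_eq_getElem?_getD]
            have h2 : (tape r)[r]? = ((tape r).drop r)[0]? := by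
              simp [List.getElem?_drop]
            rw [h2, hd]; simp
          show tape r ++ [QSym.a, QSym.b] = tape (r+1)
          rw [tape_succ, hg]; rfl
      | readA r w t hd =>
          simp only at ih; subst ih
          have hg : (tape r).getD r QSym.a = QSym.A := by
            rw [List.getD_eq_getElem?_getD]
            have h2 : (tape r)[r]? = ((tape r).drop r)[0]? := by
              simp [List.getElem?_drop]
            rw [h2, hd]; simp
          show tape r ++ [QSym.A, QSym.b] = tape (r+1)
          rw [tape_succ, hg]; rfl

/-- consuming a whole queue segment -/
lemma consume (q : List QSym) : ∀ (z w : List QSym) (r : ℕ),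
    w.drop r = q ++ z →
    Relation.ReflTransGen QStep (r, w) (r + q.length, w ++ phi q) := by
  induction q with
  | nil => intro z w r _; simpa using Relation.ReflTransGen.refl
  | cons x q ih =>
      intro z w r hd
      have hstep : QStep (r, w) (r + 1, w ++ ext x) := by
        cases x
        · exact QStep.reada r w (q ++ z) (by simpa [ext] using hd)
        · exact QStep.readb r w (q ++ z) (by simpa [ext] using hd)
        · exact QStep.readA r w (q ++ z) (by simpa [ext] using hd)
      have hr : r ≤ w.length := by
        by_contra hc
        push_neg at hc
        rw [List.drop_eq_nil_of_le (by omega)] at hd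
        simp at hd
      have hlen : w.length = r + 1 + q.length + z.length := by
        have := congrArg List.length hd
        simp at this
        omega
      have hd2 : (w ++ ext x).drop (r+1) = q ++ (z ++ ext x) := by
        rw [List.drop_append_of_le_length (by omega)]
        have h1 : w.drop (r+1) = q ++ z := by
          have h2 : w.drop (r+1) = (w.drop r).drop 1 := by
            rw [List.drop_drop]
          rw [h2, hd]; rfl
        rw [h1]; simp
      have hrest := ih (z ++ ext x) (w ++ ext x) (r+1) hd2
      have hr2 : r + (x :: q).length = r + 1 + q.length := by
        simp only [List.length_cons]; omega
      have hw2 : w ++ phi (x :: q) = (w ++ ext x) ++ phi q := by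
        simp
      rw [hr2, hw2]
      exact Relation.ReflTransGen.head hstep hrest

lemma T_reach (k : ℕ) : QReaches (p k, T k) := by
  induction k with
  | zero => exact Relation.ReflTransGen.refl
  | succ k ih =>
      have h := consume (D k) [] (T k) (p k) (by rw [T_drop]; simp)
      rw [p_succ, T_succ]
      exact ih.trans h

lemma tape_p_eq_T (k : ℕ) : tape (p k) = T k :=
  (reach_eq_tape (T_reach k)).symm

lemma getD_T_of_lt_tape (k r : ℕ) (hk : r ≤ p k) :
    (T k).getD r QSym.a = (tape r).getD r QSym.a := by
  obtain ⟨t2, ht2⟩ := tape_prefix hk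
  rw [tape_p_eq_T] at ht2
  rw [← ht2, List.getD_eq_getElem?_getD, List.getD_eq_getElem?_getD,
    List.getElem?_append, if_pos (lt_tape_length r)]

lemma final_struct {s : List QSym} (h : FinalTape s) :
    ∃ j, s = T j ++ [QSym.A, QSym.A] := by
  obtain ⟨r, w, t, hreach, hdrop, rfl⟩ := h
  have hw : w = tape r := reach_eq_tape hreach
  subst hw
  have hg : (tape r).getD r QSym.a = QSym.A := by
    rw [List.getD_eq_getElem?_getD]
    have h2 : (tape r)[r]? = ((tape r).drop r)[0]? := by
      simp [List.getElem?_drop]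
    rw [h2, hdrop]; simp
  have hrp : r < p (r + 1) := by
    have h1 := le_p r
    have h2 : 1 ≤ (D r).length := by
      have := (D_len r).1
      have := Nat.fib_pos.2 (show 0 < r + 2 by omega)
      omega
    rw [p_succ]; omega
  have hTg : (T r).getD r QSym.a = QSym.A := by
    rw [getD_T_of_lt_tape r r (le_p r), hg]
  obtain ⟨j, hj⟩ := (A_pos r r hrp).1 hTg
  exact ⟨j, by rw [hj, ← tape_p_eq_T]⟩

lemma final_exists (j : ℕ) : FinalTape (T j ++ [QSym.A, QSym.A]) := by
  obtain ⟨u, hu, -⟩ := D_struct j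
  exact ⟨p j, T j, u, T_reach j, by rw [T_drop, hu], rfl⟩

lemma final_len (j : ℕ) :
    (T j ++ [QSym.A, QSym.A]).length = Nat.fib (j + 4) := by
  have h1 : p (j+1) + 2 = Nat.fib (j+4) := p_eq (j+1)
  rw [List.length_append, T_length]
  simpa using h1

lemma fib3 : Nat.fib 3 = 2 := by decide

end Q16

/-- in any halting computation the final number of tape symbols
is a Fibonacci number (convention 1, 2, 3, 5, 8, …, i.e. `Nat.fib (k+2)`);
conversely every large enough Fibonacci number is so obtained; and in the final
tape string the occurrences of A, apart from the last, are exactly at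
(1-indexed) positions F − 1 for Fibonacci numbers F ≥ 2. -/
theorem stmt_16 :
    (∀ s : List QSym, FinalTape s → ∃ k : ℕ, s.length = Nat.fib (k + 2)) ∧
    (∃ F₀ : ℕ, ∀ F : ℕ, F₀ ≤ F → (∃ k : ℕ, F = Nat.fib (k + 2)) →
      ∃ s : List QSym, FinalTape s ∧ s.length = F) ∧
    (∀ s : List QSym, FinalTape s → ∀ (i : ℕ) (h : i < s.length),
      (s.get ⟨i, h⟩ = QSym.A ∧ i + 1 < s.length) ↔
        ∃ k : ℕ, i + 2 = Nat.fib (k + 3)) := by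
  refine ⟨?_, ?_, ?_⟩
  · intro s hs
    obtain ⟨j, rfl⟩ := Q16.final_struct hs
    exact ⟨j + 2, Q16.final_len j⟩
  · refine ⟨3, ?_⟩
    rintro F hF ⟨k, rfl⟩
    have hk : 2 ≤ k := by
      by_contra hc
      push_neg at hc
      have : Nat.fib (k + 2) ≤ Nat.fib 3 := Nat.fib_mono (by omega)
      rw [Q16.fib3] at this
      omega
    refine ⟨Q16.T (k - 2) ++ [QSym.A, QSym.A], Q16.final_exists _, ?_⟩
    rw [Q16.final_len]
    congr 1
    omega
  · intro s hs i h
    obtain ⟨j, rfl⟩ := Q16.final_struct hs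
    have hTlen : (Q16.T j).length = Q16.p (j+1) := Q16.T_length j
    have hslen : (Q16.T j ++ [QSym.A, QSym.A]).length = Q16.p (j+1) + 2 := by
      rw [List.length_append, hTlen]; rfl
    have hf4 : Q16.p (j+1) + 2 = Nat.fib (j+4) := Q16.p_eq (j+1)
    have hf4' : Nat.fib (j+1+3) = Nat.fib (j+4) := rfl
    have hget : (Q16.T j ++ [QSym.A, QSym.A]).get ⟨i, h⟩
        = (Q16.T j ++ [QSym.A, QSym.A]).getD i QSym.a := by
      rw [List.getD_eq_getElem _ _ h]
      rfl
    rcases Nat.lt_trichotomy i (Q16.p (j+1)) with hi | hi | hi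
    · -- inside T j
      have hgi : (Q16.T j ++ [QSym.A, QSym.A]).getD i QSym.a
          = (Q16.T j).getD i QSym.a := by
        rw [List.getD_eq_getElem?_getD, List.getD_eq_getElem?_getD,
          List.getElem?_append, if_pos (by omega)]
      have hiff := Q16.A_pos j i hi
      constructor
      · rintro ⟨hA, -⟩
        rw [hget, hgi] at hA
        obtain ⟨m, rfl⟩ := hiff.1 hA
        exact ⟨m, Q16.p_eq m⟩
      · rintro ⟨m, hm⟩
        have hpm : i = Q16.p m := by
          have := Q16.p_eq m
          omega
        refine ⟨?_, by omega⟩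
        rw [hget, hgi]
        exact hiff.2 ⟨m, hpm⟩
    · -- the first appended A
      have hA : (Q16.T j ++ [QSym.A, QSym.A]).getD i QSym.a = QSym.A := by
        rw [List.getD_eq_getElem?_getD, List.getElem?_append,
          if_neg (by omega), hTlen, ← hi]
        simp
      constructor
      · rintro -
        exact ⟨j + 1, by omega⟩
      · rintro -
        exact ⟨by rw [hget, hA], by omega⟩
    · -- the last appended A
      have hi2 : i = Q16.p (j+1) + 1 := by omega
      constructor
      · rintro ⟨-, hlt⟩
        omega
      · rintro ⟨m, hm⟩
        exfalso
        have h1 : Nat.fib (j+4) < Nat.fib (m+3) := by omega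
        have h2 : j + 5 ≤ m + 3 := by
          by_contra hc
          push_neg at hc
          have := Nat.fib_mono (show m + 3 ≤ j + 4 by omega)
          omega
        have h3 : Nat.fib (j+5) ≤ Nat.fib (m+3) := Nat.fib_mono h2
        have h4 : Nat.fib (j+5) = Nat.fib (j+3) + Nat.fib (j+4) := Nat.fib_add_two
        have h5 : Nat.fib 3 ≤ Nat.fib (j+3) := Nat.fib_mono (by omega)
        rw [Q16.fib3] at h5
        omega
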